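/- For every s ≥ 1, average-case L₂-approximation with Gaussian kernels is EC-(s,1)-weakly tractable if and only if it is EC-weakly tractable, if and only if lim_{j→∞} γ_j² = 0. -/

import Mathlib

open Filter

/-- `omegaOf x` is `ω` for shape parameter squared `x = γ²`:
`ω = 2γ²/(1+2γ²+√(1+4γ²))`. -/
noncomputable def omegaOf (x : ℝ) : ℝ := 2 * x / (1 + 2 * x + Real.sqrt (1 + 4 * x))

/-- Eigenvalues `λ_d(j) = ∏_{k=1}^d (1-ω_k) ω_k^{j_k}`, where `g k = γ_{k+1}²`. -/
noncomputable def eigen (g : ℕ → ℝ) (d : ℕ) (j : Fin d → ℕ) : ℝ :=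
  ∏ k : Fin d, (1 - omegaOf (g (k : ℕ))) * omegaOf (g (k : ℕ)) ^ (j k)

/-- The information complexity `n(ε,d)`: the least `n` such that some finite set `S` of
multi-indices with `|S| ≤ n` satisfies `∑_{j ∉ S} λ_d(j) ≤ ε²`. -/
noncomputable def infoComp (g : ℕ → ℝ) (ε : ℝ) (d : ℕ) : ℕ :=
  sInf {n : ℕ | ∃ S : Finset (Fin d → ℕ), S.card ≤ n ∧
    (∑' j : {j : Fin d → ℕ // j ∉ S}, eigen g d j.1) ≤ ε ^ 2}

/-- EC-`(s,t)`-weak tractability: `lim_{ε⁻¹+d→∞} ln n(ε,d) / ((1+ln ε⁻¹)^s + d^t) = 0`. -/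
def ECWeakTract (g : ℕ → ℝ) (s t : ℝ) : Prop :=
  ∀ η : ℝ, 0 < η → ∃ M : ℝ, ∀ (d : ℕ) (ε : ℝ), 1 ≤ d → 0 < ε → ε < 1 →
    M ≤ ε⁻¹ + d →
      Real.log (infoComp g ε d : ℝ) ≤ η * ((1 + Real.log ε⁻¹) ^ s + (d : ℝ) ^ t)


lemma omega_den_pos {x : ℝ} (hx : 0 ≤ x) : 0 < 1 + 2 * x + Real.sqrt (1 + 4 * x) := by
  have := Real.sqrt_nonneg (1 + 4 * x); nlinarith

lemma omega_pos {x : ℝ} (hx : 0 < x) : 0 < omegaOf x := by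
  have := omega_den_pos hx.le
  exact div_pos (by linarith) this

lemma omega_nonneg {x : ℝ} (hx : 0 ≤ x) : 0 ≤ omegaOf x := by
  have := omega_den_pos hx
  exact div_nonneg (by linarith) this.le

lemma omega_lt_one {x : ℝ} (hx : 0 ≤ x) : omegaOf x < 1 := by
  have h := omega_den_pos hx
  have hs := Real.sqrt_nonneg (1 + 4 * x)
  rw [omegaOf, div_lt_one h]; linarith

lemma omega_le_self {x : ℝ} (hx : 0 ≤ x) : omegaOf x ≤ x := by
  have h := omega_den_pos hx
  have hs : 1 ≤ Real.sqrt (1 + 4 * x) := by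
    have := Real.sqrt_le_sqrt (show (1:ℝ) ≤ 1 + 4 * x by linarith)
    simpa using this
  rw [omegaOf, div_le_iff₀ h]; nlinarith

lemma omega_eq {x : ℝ} (hx : 0 ≤ x) :
    omegaOf x = 1 - 2 / (Real.sqrt (1 + 4 * x) + 1) := by
  set u := Real.sqrt (1 + 4 * x) with hu
  have hu1 : 1 ≤ u := by
    have := Real.sqrt_le_sqrt (show (1:ℝ) ≤ 1 + 4 * x by linarith)
    simpa [hu] using this
  have hu2 : u ^ 2 = 1 + 4 * x := Real.sq_sqrt (by linarith)
  have hden : 0 < 1 + 2 * x + u := by nlinarith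
  have hden2 : 0 < u + 1 := by linarith
  rw [omegaOf, ← hu]
  field_simp
  nlinarith

lemma omega_mono {x y : ℝ} (hx : 0 ≤ x) (hxy : x ≤ y) : omegaOf x ≤ omegaOf y := by
  rw [omega_eq hx, omega_eq (hx.trans hxy)]
  have h1 : Real.sqrt (1 + 4 * x) ≤ Real.sqrt (1 + 4 * y) := Real.sqrt_le_sqrt (by linarith)
  have h2 : (0:ℝ) < Real.sqrt (1 + 4 * x) + 1 := by positivity
  have : 2 / (Real.sqrt (1 + 4 * y) + 1) ≤ 2 / (Real.sqrt (1 + 4 * x) + 1) :=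
    div_le_div_of_nonneg_left (by norm_num) h2 (by linarith)
  linarith

/-- the cons equivalence -/
def consEquiv (d : ℕ) : ℕ × (Fin d → ℕ) ≃ (Fin (d + 1) → ℕ) where
  toFun p := Fin.cons p.1 p.2
  invFun j := (j 0, fun k => j k.succ)
  left_inv p := by simp
  right_inv j := Fin.cons_self_tail j

lemma pi_summable_tsum (d : ℕ) : ∀ (F : ℕ → ℕ → ℝ), (∀ k n, 0 ≤ F k n) →
    (∀ k, Summable (F k)) →
    Summable (fun j : Fin d → ℕ => ∏ k : Fin d, F (k : ℕ) (j k)) ∧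
    (∑' j : Fin d → ℕ, ∏ k : Fin d, F (k : ℕ) (j k)) = ∏ k : Fin d, ∑' n, F (k : ℕ) n := by
  induction d with
  | zero =>
    intro F _ _
    constructor
    · exact Summable.of_finite
    · simp [tsum_eq_single (fun (k : Fin 0) => 0) (fun b hb => by
        exact absurd (funext fun k => k.elim0) hb)]
  | succ d ih =>
    intro F hnn hs
    obtain ⟨ihs, iht⟩ := ih (fun m => F (m + 1)) (fun k n => hnn _ _) (fun k => hs _)
    have key : ∀ p : ℕ × (Fin d → ℕ),
        (∏ k : Fin (d+1), F (k : ℕ) ((consEquiv d) p k)) =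
          F 0 p.1 * ∏ k : Fin d, F ((k : ℕ) + 1) (p.2 k) := by
      intro p
      rw [Fin.prod_univ_succ]
      simp [consEquiv, Fin.cons_zero, Fin.cons_succ]
      rfl
    set G : (Fin d → ℕ) → ℝ := fun j => ∏ k : Fin d, F ((k : ℕ) + 1) (j k) with hG
    have hGnn : 0 ≤ G := fun j => Finset.prod_nonneg fun k _ => hnn _ _
    have hF0nn : 0 ≤ F 0 := fun n => hnn 0 n
    have hsum2 : Summable (fun p : ℕ × (Fin d → ℕ) => F 0 p.1 * G p.2) :=
      Summable.mul_of_nonneg (hs 0) ihs hF0nn hGnn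
    constructor
    · rw [← (consEquiv d).summable_iff]
      exact hsum2.congr fun p => (key p).symm
    · rw [← (consEquiv d).tsum_eq, tsum_congr key, Fin.prod_univ_succ]
      have := Summable.tsum_mul_tsum (f := F 0) (g := fun j : Fin d → ℕ => ∏ k : Fin d, F ((k:ℕ)+1) (j k))
        (hs 0) ihs hsum2
      rw [← this, iht]
      simp

section EigenFacts
variable {g : ℕ → ℝ} (hpos : ∀ j, 0 < g j)
include hpos

lemma w_pos (k : ℕ) : 0 < omegaOf (g k) := omega_pos (hpos k)
lemma w_lt_one (k : ℕ) : omegaOf (g k) < 1 := omega_lt_one (hpos k).le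

lemma eigen_pos (d : ℕ) (j : Fin d → ℕ) : 0 < eigen g d j :=
  Finset.prod_pos fun k _ => mul_pos (by linarith [w_lt_one hpos (k:ℕ)])
    (pow_pos (w_pos hpos _) _)

lemma eigen_summable (d : ℕ) : Summable (eigen g d) :=
  (pi_summable_tsum d (fun m n => (1 - omegaOf (g m)) * omegaOf (g m) ^ n)
    (fun m n => mul_nonneg (by linarith [w_lt_one hpos m]) (pow_nonneg (w_pos hpos m).le _))
    (fun m => (summable_geometric_of_lt_one (w_pos hpos m).le (w_lt_one hpos m)).mul_left _)).1

lemma eigen_tsum_one (d : ℕ) : ∑' j : Fin d → ℕ, eigen g d j = 1 := by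
  have := (pi_summable_tsum d (fun m n => (1 - omegaOf (g m)) * omegaOf (g m) ^ n)
    (fun m n => mul_nonneg (by linarith [w_lt_one hpos m]) (pow_nonneg (w_pos hpos m).le _))
    (fun m => (summable_geometric_of_lt_one (w_pos hpos m).le (w_lt_one hpos m)).mul_left _)).2
  unfold eigen
  rw [this]
  apply Finset.prod_eq_one
  intro k _
  rw [tsum_mul_left, tsum_geometric_of_lt_one (w_pos hpos k).le (w_lt_one hpos k)]
  have h1 : (1:ℝ) - omegaOf (g (k:ℕ)) ≠ 0 := by linarith [w_lt_one hpos (k:ℕ)]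
  field_simp

/-- rpow of eigen -/
lemma eigen_rpow {τ : ℝ} (hτ : 0 < τ) (d : ℕ) (j : Fin d → ℕ) :
    eigen g d j ^ τ =
      ∏ k : Fin d, (1 - omegaOf (g (k : ℕ))) ^ τ * (omegaOf (g (k : ℕ)) ^ τ) ^ (j k) := by
  unfold eigen
  rw [← Real.finset_prod_rpow Finset.univ
    (fun k : Fin d => (1 - omegaOf (g (k : ℕ))) * omegaOf (g (k : ℕ)) ^ (j k))
    (fun k _ => mul_nonneg (by linarith [w_lt_one hpos (k:ℕ)])
      (pow_nonneg (w_pos hpos (k:ℕ)).le _)) τ]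
  apply Finset.prod_congr rfl
  intro k _
  rw [Real.mul_rpow (by linarith [w_lt_one hpos (k:ℕ)]) (pow_nonneg (w_pos hpos (k:ℕ)).le _),
    ← Real.rpow_natCast (omegaOf (g (k:ℕ))) (j k), ← Real.rpow_natCast (omegaOf (g (k:ℕ)) ^ τ) (j k),
    ← Real.rpow_mul (w_pos hpos (k:ℕ)).le, ← Real.rpow_mul (w_pos hpos (k:ℕ)).le, mul_comm τ]

lemma eigen_rpow_summable_tsum {τ : ℝ} (hτ : 0 < τ) (hτ1 : τ < 1) (d : ℕ) :
    Summable (fun j : Fin d → ℕ => eigen g d j ^ τ) ∧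
    (∑' j : Fin d → ℕ, eigen g d j ^ τ) =
      ∏ k : Fin d, (1 - omegaOf (g (k : ℕ))) ^ τ / (1 - omegaOf (g (k : ℕ)) ^ τ) := by
  have hwτ : ∀ m : ℕ, omegaOf (g m) ^ τ < 1 := fun m =>
    Real.rpow_lt_one (w_pos hpos m).le (w_lt_one hpos m) hτ
  have hwτ0 : ∀ m : ℕ, 0 < omegaOf (g m) ^ τ := fun m =>
    Real.rpow_pos_of_pos (w_pos hpos m) τ
  have h := pi_summable_tsum d (fun m n => (1 - omegaOf (g m)) ^ τ * (omegaOf (g m) ^ τ) ^ n)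
    (fun m n => mul_nonneg (Real.rpow_nonneg (by linarith [w_lt_one hpos m]) τ)
      (pow_nonneg (hwτ0 m).le _))
    (fun m => (summable_geometric_of_lt_one (hwτ0 m).le (hwτ m)).mul_left _)
  constructor
  · exact h.1.congr fun j => (eigen_rpow hpos hτ d j).symm
  · rw [tsum_congr (eigen_rpow hpos hτ d), h.2]
    apply Finset.prod_congr rfl
    intro k _
    rw [tsum_mul_left, tsum_geometric_of_lt_one (hwτ0 (k:ℕ)).le (hwτ (k:ℕ)), div_eq_mul_inv]
end EigenFacts

/-- `M_τ(d)` -/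
noncomputable def Mtau (g : ℕ → ℝ) (τ : ℝ) (d : ℕ) : ℝ :=
  ∏ k : Fin d, (1 - omegaOf (g (k : ℕ))) ^ τ / (1 - omegaOf (g (k : ℕ)) ^ τ)

lemma Mtau_pos {g : ℕ → ℝ} (hpos : ∀ j, 0 < g j) {τ : ℝ} (hτ : 0 < τ) (hτ1 : τ < 1) (d : ℕ) :
    0 < Mtau g τ d := by
  apply Finset.prod_pos
  intro k _
  have h1 : omegaOf (g (k:ℕ)) < 1 := omega_lt_one (hpos _).le
  have h0 : 0 < omegaOf (g (k:ℕ)) := omega_pos (hpos _)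
  have : omegaOf (g (k:ℕ)) ^ τ < 1 := Real.rpow_lt_one h0.le h1 hτ
  exact div_pos (Real.rpow_pos_of_pos (by linarith) τ) (by linarith)

lemma exists_good_set {g : ℕ → ℝ} (hpos : ∀ j, 0 < g j) {τ : ℝ} (hτ0 : 0 < τ) (hτ1 : τ < 1)
    (d : ℕ) {ε : ℝ} (hε0 : 0 < ε) :
    ∃ S : Finset (Fin d → ℕ),
      (∑' j : {j : Fin d → ℕ // j ∉ S}, eigen g d j.1) ≤ ε ^ 2 ∧
      (S.card : ℝ) ≤ Mtau g τ d ^ (1/(1-τ)) * (ε ^ 2) ^ (-(τ/(1-τ))) := by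
  set lam := eigen g d with hlam
  have hlsum : Summable lam := eigen_summable hpos d
  have hlpos : ∀ j, 0 < lam j := eigen_pos hpos d
  obtain ⟨hμsum, hμtsum⟩ := eigen_rpow_summable_tsum hpos hτ0 hτ1 d
  set M := Mtau g τ d with hM
  have hMpos : 0 < M := Mtau_pos hpos hτ0 hτ1 d
  have h1τ : 0 < 1 - τ := by linarith
  set δ := (ε ^ 2 / M) ^ (1/(1-τ)) with hδdef
  have hδ : 0 < δ := Real.rpow_pos_of_pos (div_pos (by positivity) hMpos) _
  -- finiteness of the sublevel set
  have hcof : ∀ᶠ j in cofinite, lam j < δ :=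
    (tendsto_order.1 hlsum.tendsto_cofinite_zero).2 δ hδ
  have hfin : {j : Fin d → ℕ | δ < lam j}.Finite := by
    rw [Filter.eventually_cofinite] at hcof
    exact hcof.subset (fun j hj => by simp only [Set.mem_setOf_eq] at *; linarith)
  set S := hfin.toFinset with hS
  have hmemS : ∀ j, j ∈ S ↔ δ < lam j := by
    intro j; rw [hS, Set.Finite.mem_toFinset]; rfl
  refine ⟨S, ?_, ?_⟩
  · -- tail bound
    have key : ∀ j : {j : Fin d → ℕ // j ∉ S}, lam j.1 ≤ δ ^ (1-τ) * lam j.1 ^ τ := by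
      rintro ⟨j, hj⟩
      have hjle : lam j ≤ δ := by
        by_contra h
        exact hj ((hmemS j).2 (lt_of_not_ge h))
      calc lam j = lam j ^ ((1-τ) + τ) := by rw [sub_add_cancel, Real.rpow_one]
        _ = lam j ^ (1-τ) * lam j ^ τ := Real.rpow_add (hlpos j) _ _
        _ ≤ δ ^ (1-τ) * lam j ^ τ := by
            apply mul_le_mul_of_nonneg_right
              (Real.rpow_le_rpow (hlpos j).le hjle h1τ.le) (Real.rpow_nonneg (hlpos j).le τ)
    have h2 : (∑' j : {j : Fin d → ℕ // j ∉ S}, lam j.1)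
        ≤ ∑' j : {j : Fin d → ℕ // j ∉ S}, δ ^ (1-τ) * lam j.1 ^ τ := by
      apply Summable.tsum_le_tsum key (hlsum.subtype _) ((hμsum.subtype _).mul_left _)
    have h3 : (∑' j : {j : Fin d → ℕ // j ∉ S}, δ ^ (1-τ) * lam j.1 ^ τ)
        = δ ^ (1-τ) * ∑' j : {j : Fin d → ℕ // j ∉ S}, lam j.1 ^ τ := tsum_mul_left
    have h4 : (∑' j : {j : Fin d → ℕ // j ∉ S}, lam j.1 ^ τ) ≤ M := by
      rw [hM, Mtau, ← hμtsum]
      exact Summable.tsum_subtype_le (fun j => lam j ^ τ) _ (fun j => Real.rpow_nonneg (hlpos j).le τ) hμsum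
    have h5 : δ ^ (1-τ) = ε ^ 2 / M := by
      rw [hδdef, ← Real.rpow_mul (div_pos (by positivity) hMpos).le,
        one_div_mul_cancel (ne_of_gt h1τ), Real.rpow_one]
    calc (∑' j : {j : Fin d → ℕ // j ∉ S}, lam j.1)
        ≤ δ ^ (1-τ) * ∑' j : {j : Fin d → ℕ // j ∉ S}, lam j.1 ^ τ := h2.trans (le_of_eq h3)
      _ ≤ δ ^ (1-τ) * M := by
          apply mul_le_mul_of_nonneg_left h4 (Real.rpow_nonneg hδ.le _)
      _ = ε ^ 2 := by rw [h5]; field_simp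
  · -- cardinality bound
    have hδτ : 0 < δ ^ τ := Real.rpow_pos_of_pos hδ τ
    have hcard : (S.card : ℝ) * δ ^ τ ≤ M := by
      have h1 : (S.card) • (δ ^ τ) ≤ ∑ j ∈ S, lam j ^ τ := by
        apply Finset.card_nsmul_le_sum
        intro j hj
        exact Real.rpow_le_rpow hδ.le (le_of_lt ((hmemS j).1 hj)) hτ0.le
      have h2 : ∑ j ∈ S, lam j ^ τ ≤ M := by
        rw [hM, Mtau, ← hμtsum]
        exact Summable.sum_le_tsum S (fun j _ => Real.rpow_nonneg (hlpos j).le τ) hμsum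
      rw [nsmul_eq_mul] at h1
      linarith
    have hrw : M / δ ^ τ = M ^ (1/(1-τ)) * (ε ^ 2) ^ (-(τ/(1-τ))) := by
      have hx : (0:ℝ) < ε ^ 2 / M := div_pos (by positivity) hMpos
      have hδτ2 : δ ^ τ = (ε ^ 2) ^ (τ/(1-τ)) / M ^ (τ/(1-τ)) := by
        rw [hδdef, ← Real.rpow_mul hx.le, Real.div_rpow (by positivity) hMpos.le]
        ring_nf
      have hsum : M * M ^ (τ/(1-τ)) = M ^ (1/(1-τ)) := by
        have he : (1:ℝ) + τ/(1-τ) = 1/(1-τ) := by field_simp; ring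
        rw [← he, Real.rpow_add hMpos, Real.rpow_one]
      rw [hδτ2, div_div_eq_mul_div, hsum, Real.rpow_neg (by positivity : (0:ℝ) ≤ ε ^ 2),
        div_eq_mul_inv]
    rw [← hrw, le_div_iff₀ hδτ]
    exact hcard

lemma one_le_Mtau {g : ℕ → ℝ} (hpos : ∀ j, 0 < g j) {τ : ℝ} (hτ0 : 0 < τ) (hτ1 : τ < 1)
    (d : ℕ) : 1 ≤ Mtau g τ d := by
  obtain ⟨hμsum, hμtsum⟩ := eigen_rpow_summable_tsum hpos hτ0 hτ1 d
  rw [Mtau, ← hμtsum, ← eigen_tsum_one hpos d]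
  apply Summable.tsum_le_tsum _ (eigen_summable hpos d) hμsum
  intro j
  have h1 : eigen g d j ≤ 1 := by
    rw [← eigen_tsum_one hpos d]
    exact Summable.le_tsum (eigen_summable hpos d) j (fun k _ => (eigen_pos hpos d k).le)
  calc eigen g d j = eigen g d j ^ (1:ℝ) := (Real.rpow_one _).symm
    _ ≤ eigen g d j ^ τ :=
        Real.rpow_le_rpow_of_exponent_ge (eigen_pos hpos d j) h1 hτ1.le

lemma infoComp_log_le {g : ℕ → ℝ} (hpos : ∀ j, 0 < g j) {τ : ℝ} (hτ0 : 0 < τ) (hτ1 : τ < 1)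
    (d : ℕ) {ε : ℝ} (hε0 : 0 < ε) (hε1 : ε < 1) :
    Real.log (infoComp g ε d : ℝ) ≤
      (1/(1-τ)) * Real.log (Mtau g τ d) + (2*τ/(1-τ)) * Real.log ε⁻¹ := by
  have h1τ : 0 < 1 - τ := by linarith
  have hM1 : 1 ≤ Mtau g τ d := one_le_Mtau hpos hτ0 hτ1 d
  have hMpos : 0 < Mtau g τ d := by linarith
  have hlog : 0 < Real.log ε⁻¹ := Real.log_pos (by rw [lt_inv_comm₀] <;> simpa)
  have hlogM : 0 ≤ Real.log (Mtau g τ d) := Real.log_nonneg hM1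
  obtain ⟨S, htail, hcard⟩ := exists_good_set hpos hτ0 hτ1 d hε0
  have hn : infoComp g ε d ≤ S.card := Nat.sInf_le ⟨S, le_refl _, htail⟩
  rcases Nat.eq_zero_or_pos (infoComp g ε d) with h0 | h0
  · rw [h0]
    simp only [Nat.cast_zero, Real.log_zero]
    positivity
  · have hA : (0:ℝ) < Mtau g τ d ^ (1/(1-τ)) * (ε ^ 2) ^ (-(τ/(1-τ))) := by
      apply mul_pos (Real.rpow_pos_of_pos hMpos _) (Real.rpow_pos_of_pos (by positivity) _)
    have hle : (infoComp g ε d : ℝ) ≤ Mtau g τ d ^ (1/(1-τ)) * (ε ^ 2) ^ (-(τ/(1-τ))) :=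
      le_trans (Nat.cast_le.2 hn) hcard
    have := Real.log_le_log (by exact_mod_cast h0) hle
    apply this.trans
    rw [Real.log_mul (ne_of_gt (Real.rpow_pos_of_pos hMpos _))
        (ne_of_gt (Real.rpow_pos_of_pos (by positivity) _)),
      Real.log_rpow hMpos, Real.log_rpow (by positivity : (0:ℝ) < ε ^ 2)]
    have : Real.log (ε ^ 2) = -(2 * Real.log ε⁻¹) := by
      rw [Real.log_pow, Real.log_inv]; push_cast; ring
    rw [this]
    ring_nf
    apply le_of_eq
    ring

/-- `c k = -log (1 - ω_k^τ)` -/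
noncomputable def cterm (g : ℕ → ℝ) (τ : ℝ) (k : ℕ) : ℝ :=
  -Real.log (1 - omegaOf (g k) ^ τ)

lemma cterm_nonneg {g : ℕ → ℝ} (hpos : ∀ j, 0 < g j) {τ : ℝ} (hτ0 : 0 < τ) (hτ1 : τ < 1)
    (k : ℕ) : 0 ≤ cterm g τ k := by
  have h0 : 0 < omegaOf (g k) := omega_pos (hpos k)
  have h1 : omegaOf (g k) ^ τ < 1 := Real.rpow_lt_one h0.le (omega_lt_one (hpos k).le) hτ0
  have h2 : 0 < omegaOf (g k) ^ τ := Real.rpow_pos_of_pos h0 τ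
  have : Real.log (1 - omegaOf (g k) ^ τ) ≤ 0 :=
    Real.log_nonpos (by linarith) (by linarith)
  simp [cterm]; linarith

lemma log_Mtau_le {g : ℕ → ℝ} (hpos : ∀ j, 0 < g j) {τ : ℝ} (hτ0 : 0 < τ) (hτ1 : τ < 1)
    (d : ℕ) : Real.log (Mtau g τ d) ≤ ∑ k ∈ Finset.range d, cterm g τ k := by
  have key : ∀ k : ℕ, 0 < omegaOf (g k) ∧ omegaOf (g k) ^ τ < 1 ∧ 0 < 1 - omegaOf (g k) := by
    intro k
    exact ⟨omega_pos (hpos k),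
      Real.rpow_lt_one (omega_pos (hpos k)).le (omega_lt_one (hpos k).le) hτ0,
      by linarith [omega_lt_one (hpos k).le]⟩
  rw [Mtau, Real.log_prod]
  · rw [← Fin.sum_univ_eq_sum_range (fun k => cterm g τ k) d]
    apply Finset.sum_le_sum
    intro k _
    obtain ⟨h0, h1, h2⟩ := key (k : ℕ)
    have h3 : 0 < omegaOf (g (k:ℕ)) ^ τ := Real.rpow_pos_of_pos h0 τ
    rw [Real.log_div (ne_of_gt (Real.rpow_pos_of_pos h2 τ)) (by linarith)]
    rw [Real.log_rpow h2]
    have h4 : Real.log (1 - omegaOf (g (k:ℕ))) ≤ 0 := Real.log_nonpos (by linarith) (by linarith)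
    have h5 : 0 ≤ τ := hτ0.le
    have : τ * Real.log (1 - omegaOf (g (k:ℕ))) ≤ 0 := mul_nonpos_of_nonneg_of_nonpos h5 h4
    simp only [cterm]
    linarith
  · intro k _
    obtain ⟨h0, h1, h2⟩ := key (k : ℕ)
    exact div_ne_zero (ne_of_gt (Real.rpow_pos_of_pos h2 τ)) (by linarith)

lemma cterm_tendsto {g : ℕ → ℝ} (hpos : ∀ j, 0 < g j) {τ : ℝ} (hτ0 : 0 < τ)
    (hg : Tendsto g atTop (nhds 0)) : Tendsto (cterm g τ) atTop (nhds 0) := by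
  have hω : Tendsto (fun k => omegaOf (g k)) atTop (nhds 0) := by
    apply squeeze_zero (fun k => omega_nonneg (hpos k).le) (fun k => omega_le_self (hpos k).le) hg
  have hrpow : Tendsto (fun k => omegaOf (g k) ^ τ) atTop (nhds 0) := by
    have hc : ContinuousAt (fun x : ℝ => x ^ τ) 0 :=
      Real.continuousAt_rpow_const 0 τ (Or.inr hτ0.le)
    have := hc.tendsto.comp hω
    simpa [Function.comp_def, Real.zero_rpow (ne_of_gt hτ0)] using this
  have hlog : ContinuousAt Real.log 1 := Real.continuousAt_log one_ne_zero
  have h1 : Tendsto (fun k => 1 - omegaOf (g k) ^ τ) atTop (nhds 1) := by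
    simpa using (tendsto_const_nhds (x := (1:ℝ)) (f := atTop)).sub hrpow
  have := (hlog.tendsto.comp h1).neg
  rw [show cterm g τ = fun k => -Real.log (1 - omegaOf (g k) ^ τ) from rfl]
  simpa [cterm, Real.log_one] using this

lemma sum_cterm_le {g : ℕ → ℝ} (hpos : ∀ j, 0 < g j) {τ : ℝ} (hτ0 : 0 < τ) (hτ1 : τ < 1)
    {η' : ℝ} (hη' : 0 < η') (K : ℕ) (hK : ∀ k, K ≤ k → cterm g τ k ≤ η') (d : ℕ) :
    ∑ k ∈ Finset.range d, cterm g τ k ≤ (∑ k ∈ Finset.range K, cterm g τ k) + η' * d := by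
  classical
  rw [← Finset.sum_filter_add_sum_filter_not (Finset.range d) (fun k => k < K)]
  have h1 : ∑ k ∈ (Finset.range d).filter (fun k => k < K), cterm g τ k
      ≤ ∑ k ∈ Finset.range K, cterm g τ k := by
    apply Finset.sum_le_sum_of_subset_of_nonneg
    · intro k hk
      simp only [Finset.mem_filter, Finset.mem_range] at hk ⊢
      exact hk.2
    · intro k _ _
      exact cterm_nonneg hpos hτ0 hτ1 k
  have h2 : ∑ k ∈ (Finset.range d).filter (fun k => ¬ k < K), cterm g τ k ≤ η' * d := by
    calc ∑ k ∈ (Finset.range d).filter (fun k => ¬ k < K), cterm g τ k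
        ≤ ∑ _k ∈ (Finset.range d).filter (fun k => ¬ k < K), η' := by
          apply Finset.sum_le_sum
          intro k hk
          simp only [Finset.mem_filter, not_lt] at hk
          exact hK k hk.2
      _ = ((Finset.range d).filter (fun k => ¬ k < K)).card * η' := by
          rw [Finset.sum_const, nsmul_eq_mul]
      _ ≤ d * η' := by
          apply mul_le_mul_of_nonneg_right _ hη'.le
          exact_mod_cast le_trans (Finset.card_le_card (Finset.filter_subset _ _))
            (le_of_eq (Finset.card_range d))
      _ = η' * d := mul_comm _ _
  linarith

/-- Main upper direction: if `g → 0` then EC-WT. -/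
lemma tendsto_imp_ECWT {g : ℕ → ℝ} (hpos : ∀ j, 0 < g j)
    (hg : Tendsto g atTop (nhds 0)) : ECWeakTract g 1 1 := by
  intro η hη
  -- choose τ
  set τ := min (1/2 : ℝ) (η/8) with hτdef
  have hτ0 : 0 < τ := lt_min (by norm_num) (by linarith)
  have hτh : τ ≤ 1/2 := min_le_left _ _
  have hτ1 : τ < 1 := by linarith
  have h1τ : (1:ℝ)/2 ≤ 1 - τ := by linarith
  have hτη : 4 * τ ≤ η / 2 := by
    have := min_le_right (1/2 : ℝ) (η/8)
    linarith
  -- choose K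
  have hct := cterm_tendsto hpos hτ0 hg
  have hev : ∀ᶠ k in atTop, cterm g τ k ≤ η/8 := by
    have := hct.eventually (eventually_le_nhds (show (0:ℝ) < η/8 by linarith))
    exact this
  obtain ⟨K, hK⟩ := hev.exists_forall_of_atTop
  set C := ∑ k ∈ Finset.range K, cterm g τ k with hC
  have hC0 : 0 ≤ C := Finset.sum_nonneg fun k _ => cterm_nonneg hpos hτ0 hτ1 k
  -- choose M
  refine ⟨2 * Real.exp (8 * C / η), ?_⟩
  intro d ε hd hε0 hε1 hM
  have hlog : 0 < Real.log ε⁻¹ :=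
    Real.log_pos (by rw [lt_inv_comm₀] <;> simpa)
  have hd0 : (1:ℝ) ≤ (d:ℝ) := by exact_mod_cast hd
  -- key: 8C/η ≤ log ε⁻¹ + d
  have hkey : 8 * C / η ≤ Real.log ε⁻¹ + d := by
    rcases le_or_gt (Real.exp (8 * C / η)) (ε⁻¹) with h | h
    · have : 8 * C / η ≤ Real.log ε⁻¹ := by
        calc 8 * C / η = Real.log (Real.exp (8 * C / η)) := (Real.log_exp _).symm
          _ ≤ Real.log ε⁻¹ := Real.log_le_log (Real.exp_pos _) h
      linarith
    · have : Real.exp (8 * C / η) ≤ (d:ℝ) := by linarith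
      have h2 : 8 * C / η ≤ Real.exp (8 * C / η) := by
        linarith [Real.add_one_le_exp (8 * C / η)]
      linarith
  have h2C : 2 * C ≤ (η/4) * (Real.log ε⁻¹ + d) := by
    rw [div_le_iff₀ hη] at hkey
    · linarith
  -- assemble
  have hbound := infoComp_log_le hpos hτ0 hτ1 d hε0 hε1
  have hMle := (log_Mtau_le hpos hτ0 hτ1 d).trans
    (sum_cterm_le hpos hτ0 hτ1 (by linarith : (0:ℝ) < η/8) K hK d)
  have hMnonneg : 0 ≤ Real.log (Mtau g τ d) := Real.log_nonneg (one_le_Mtau hpos hτ0 hτ1 d)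
  have hfrac1 : 1/(1-τ) ≤ 2 := by
    rw [div_le_iff₀ (by linarith)]
    linarith
  have hfrac2 : 2*τ/(1-τ) ≤ 4*τ := by
    rw [div_le_iff₀ (by linarith)]
    nlinarith
  have step1 : (1/(1-τ)) * Real.log (Mtau g τ d) ≤ 2 * (C + (η/8) * d) := by
    have := mul_le_mul hfrac1 hMle hMnonneg (by norm_num)
    calc (1/(1-τ)) * Real.log (Mtau g τ d) ≤ 2 * Real.log (Mtau g τ d) :=
          mul_le_mul_of_nonneg_right hfrac1 hMnonneg
      _ ≤ 2 * (C + (η/8) * d) := by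
          have := hMle
          nlinarith [hMle]
  have step2 : (2*τ/(1-τ)) * Real.log ε⁻¹ ≤ (η/2) * Real.log ε⁻¹ := by
    apply mul_le_mul_of_nonneg_right _ hlog.le
    linarith
  have final : Real.log (infoComp g ε d : ℝ) ≤
      2*C + (η/4) * d + (η/2) * Real.log ε⁻¹ := by linarith
  have : Real.log (infoComp g ε d : ℝ) ≤ η * ((1 + Real.log ε⁻¹) + d) := by
    nlinarith [hη.le]
  calc Real.log (infoComp g ε d : ℝ) ≤ η * ((1 + Real.log ε⁻¹) + d) := this
    _ = η * ((1 + Real.log ε⁻¹) ^ (1:ℝ) + (d:ℝ) ^ (1:ℝ)) := by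
        rw [Real.rpow_one, Real.rpow_one]

lemma infoComp_spec {g : ℕ → ℝ} (hpos : ∀ j, 0 < g j) {ε : ℝ} (hε0 : 0 < ε) (d : ℕ) :
    ∃ S : Finset (Fin d → ℕ), S.card ≤ infoComp g ε d ∧
      (∑' j : {j : Fin d → ℕ // j ∉ S}, eigen g d j.1) ≤ ε ^ 2 := by
  have hne : {n : ℕ | ∃ S : Finset (Fin d → ℕ), S.card ≤ n ∧
      (∑' j : {j : Fin d → ℕ // j ∉ S}, eigen g d j.1) ≤ ε ^ 2}.Nonempty := by
    have htt := tendsto_tsum_compl_atTop_zero (eigen g d)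
    have := (tendsto_order.1 htt).2 (ε ^ 2) (by positivity)
    obtain ⟨S, hS⟩ := this.exists
    exact ⟨S.card, S, le_refl _, hS.le⟩
  have := Nat.sInf_mem hne
  exact this

lemma infoComp_lower {g : ℕ → ℝ} (hpos : ∀ j, 0 < g j) {ε : ℝ} (hε0 : 0 < ε) (d : ℕ) :
    1 - ε ^ 2 ≤ (infoComp g ε d : ℝ) * ∏ k : Fin d, (1 - omegaOf (g (k : ℕ))) := by
  obtain ⟨S, hcard, htail⟩ := infoComp_spec hpos hε0 d
  have hsum := Summable.sum_add_tsum_subtype_compl (eigen_summable hpos d) S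
  rw [eigen_tsum_one hpos d] at hsum
  have hS1 : 1 - ε ^ 2 ≤ ∑ j ∈ S, eigen g d j := by
    have : (∑' j : {j : Fin d → ℕ // j ∉ S}, eigen g d j.1) ≤ ε ^ 2 := htail
    linarith [hsum]
  have hmax : ∀ j : Fin d → ℕ, eigen g d j ≤ ∏ k : Fin d, (1 - omegaOf (g (k : ℕ))) := by
    intro j
    rw [eigen]
    apply Finset.prod_le_prod
    · intro k _
      exact mul_nonneg (by linarith [omega_lt_one (hpos (k:ℕ)).le])
        (pow_nonneg (omega_pos (hpos (k:ℕ))).le _)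
    · intro k _
      have h1 : omegaOf (g (k:ℕ)) ^ (j k) ≤ 1 :=
        pow_le_one₀ (omega_pos (hpos (k:ℕ))).le (omega_lt_one (hpos (k:ℕ)).le).le
      have h2 : 0 ≤ 1 - omegaOf (g (k:ℕ)) := by linarith [omega_lt_one (hpos (k:ℕ)).le]
      nlinarith
  have h2 : ∑ j ∈ S, eigen g d j ≤ (S.card : ℝ) * ∏ k : Fin d, (1 - omegaOf (g (k : ℕ))) := by
    have := Finset.sum_le_card_nsmul S (eigen g d) _ (fun j _ => hmax j)
    rwa [nsmul_eq_mul] at this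
  have h3 : (S.card : ℝ) ≤ (infoComp g ε d : ℝ) := by exact_mod_cast hcard
  have hprodnn : 0 ≤ ∏ k : Fin d, (1 - omegaOf (g (k : ℕ))) :=
    Finset.prod_nonneg fun k _ => by linarith [omega_lt_one (hpos (k:ℕ)).le]
  nlinarith

lemma antitone_pos_not_tendsto {g : ℕ → ℝ} (hpos : ∀ j, 0 < g j) (hanti : Antitone g)
    (hng : ¬ Tendsto g atTop (nhds 0)) : ∃ c : ℝ, 0 < c ∧ ∀ k, c ≤ g k := by
  by_contra h
  push_neg at h
  apply hng
  apply tendsto_order.2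
  constructor
  · intro a ha
    exact Eventually.of_forall fun k => lt_of_lt_of_le ha (hpos k).le
  · intro a ha
    obtain ⟨k0, hk0⟩ := h a ha
    filter_upwards [eventually_ge_atTop k0] with k hk
    exact lt_of_le_of_lt (hanti hk) hk0

lemma ECWT_imp_tendsto {g : ℕ → ℝ} (hpos : ∀ j, 0 < g j) (hanti : Antitone g)
    {s : ℝ} (hwt : ECWeakTract g s 1) : Tendsto g atTop (nhds 0) := by
  by_contra hng
  obtain ⟨c, hc, hcle⟩ := antitone_pos_not_tendsto hpos hanti hng
  set ω := omegaOf c with hω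
  have hω0 : 0 < ω := omega_pos hc
  have hω1 : ω < 1 := omega_lt_one hc.le
  set a := -Real.log (1 - ω) with ha
  have ha0 : 0 < a := by
    have : Real.log (1 - ω) < 0 := Real.log_neg (by linarith) (by linarith)
    simp [ha]; linarith
  obtain ⟨M, hM⟩ := hwt (a/2) (by linarith)
  set B := (1 + Real.log (1/2 : ℝ)⁻¹) ^ s with hB
  obtain ⟨d, hd⟩ := exists_nat_gt (max (max M 1) (B + (2/a) * (-Real.log (3/4 : ℝ))))
  have hd1 : 1 ≤ d := by
    have h1 : (1:ℝ) < d := lt_of_le_of_lt (le_max_right M 1) (lt_of_le_of_lt (le_max_left _ _) hd)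
    exact_mod_cast h1.le
  have hused := hM d (1/2) hd1 (by norm_num) (by norm_num)
    (by
      have : M ≤ (d:ℝ) := le_trans (le_max_left M 1)
        (le_trans (le_max_left _ _) hd.le)
      have : (0:ℝ) < ((1/2:ℝ))⁻¹ := by norm_num
      push_cast
      linarith)
  -- lower bound on log n
  set n := infoComp g (1/2) d with hn
  have hlow := infoComp_lower hpos (by norm_num : (0:ℝ) < 1/2) d
  have hprodle : ∏ k : Fin d, (1 - omegaOf (g (k : ℕ))) ≤ (1 - ω) ^ d := by
    calc ∏ k : Fin d, (1 - omegaOf (g (k : ℕ))) ≤ ∏ _k : Fin d, (1 - ω) := by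
          apply Finset.prod_le_prod
          · intro k _
            linarith [omega_lt_one (hpos (k:ℕ)).le]
          · intro k _
            have := omega_mono hc.le (hcle (k:ℕ))
            linarith
      _ = (1 - ω) ^ d := by
          rw [Finset.prod_const, Finset.card_univ, Fintype.card_fin]
  have h34 : (3/4 : ℝ) ≤ (n : ℝ) * (1 - ω) ^ d := by
    have hnn : (0:ℝ) ≤ (n:ℝ) := Nat.cast_nonneg n
    have h1 : (1:ℝ) - (1/2)^2 = 3/4 := by norm_num
    calc (3/4 : ℝ) = 1 - (1/2:ℝ)^2 := by norm_num
      _ ≤ (n : ℝ) * ∏ k : Fin d, (1 - omegaOf (g (k : ℕ))) := hlow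
      _ ≤ (n : ℝ) * (1 - ω) ^ d := mul_le_mul_of_nonneg_left hprodle hnn
  have hnpos : 0 < (n:ℝ) := by
    by_contra h
    push_neg at h
    have : (n:ℝ) = 0 := le_antisymm h (Nat.cast_nonneg n)
    rw [this, zero_mul] at h34
    linarith
  have hloglow : Real.log (3/4 : ℝ) ≤ Real.log (n:ℝ) + (d:ℝ) * Real.log (1 - ω) := by
    have hp : (0:ℝ) < (1 - ω) ^ d := pow_pos (by linarith) d
    calc Real.log (3/4 : ℝ) ≤ Real.log ((n:ℝ) * (1 - ω) ^ d) :=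
          Real.log_le_log (by norm_num) h34
      _ = Real.log (n:ℝ) + Real.log ((1 - ω) ^ d) := Real.log_mul (ne_of_gt hnpos) (ne_of_gt hp)
      _ = Real.log (n:ℝ) + (d:ℝ) * Real.log (1 - ω) := by rw [Real.log_pow]
  -- upper bound from tractability
  have hup : Real.log (n:ℝ) ≤ (a/2) * (B + d) := by
    have := hused
    rw [Real.rpow_one] at this
    calc Real.log (n:ℝ) ≤ (a/2) * ((1 + Real.log ((1/2:ℝ))⁻¹) ^ s + (d:ℝ)) := this
      _ = (a/2) * (B + d) := by rw [hB]
  -- contradiction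
  have hdbig : B + (2/a) * (-Real.log (3/4 : ℝ)) < (d:ℝ) :=
    lt_of_le_of_lt (le_max_right _ _) hd
  have : Real.log (3/4) + a * d ≤ Real.log (n:ℝ) := by
    have : (d:ℝ) * Real.log (1 - ω) = -(a * d) := by rw [ha]; ring
    linarith [hloglow, this]
  have hfin : Real.log (3/4) + a * d ≤ (a/2) * B + (a/2) * d := by
    have := this.trans hup
    linarith
  have hstep : (a/2) * (d:ℝ) ≤ (a/2) * B - Real.log (3/4) := by linarith
  have hmul := mul_lt_mul_of_pos_left hdbig (show (0:ℝ) < a/2 by linarith)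
  have hexp : a/2 * (B + 2/a * (-Real.log (3/4:ℝ))) = a/2*B - Real.log (3/4:ℝ) := by
    field_simp
    ring
  linarith


lemma ECWT_one_imp_s {g : ℕ → ℝ} {s : ℝ} (hs : 1 ≤ s) (h : ECWeakTract g 1 1) :
    ECWeakTract g s 1 := by
  intro η hη
  obtain ⟨M, hM⟩ := h η hη
  refine ⟨M, ?_⟩
  intro d ε hd hε0 hε1 hMle
  have h1 := hM d ε hd hε0 hε1 hMle
  apply h1.trans
  apply mul_le_mul_of_nonneg_left _ hη.le
  have hlog : 0 < Real.log ε⁻¹ :=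
    Real.log_pos (by rw [lt_inv_comm₀] <;> simpa)
  have hbase : (1:ℝ) ≤ 1 + Real.log ε⁻¹ := by linarith
  have h2 := Real.rpow_le_rpow_of_exponent_le hbase hs
  rw [Real.rpow_one] at h2
  rw [show ((1:ℝ) + Real.log ε⁻¹) ^ (1:ℝ) = 1 + Real.log ε⁻¹ from Real.rpow_one _]
  linarith

/-- For every `s ≥ 1`: EC-`(s,1)`-WT ⟺ EC-WT ⟺ `lim_j γ_j² = 0`. -/
theorem stmt7 (s : ℝ) (hs : 1 ≤ s)
    (g : ℕ → ℝ) (hpos : ∀ j, 0 < g j) (hanti : Antitone g) :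
    (ECWeakTract g s 1 ↔ ECWeakTract g 1 1) ∧
    (ECWeakTract g 1 1 ↔ Filter.Tendsto g Filter.atTop (nhds 0)) := by
  constructor
  · constructor
    · intro h
      exact tendsto_imp_ECWT hpos (ECWT_imp_tendsto hpos hanti h)
    · intro h
      exact ECWT_one_imp_s hs h
  · constructor
    · intro h
      exact ECWT_imp_tendsto hpos hanti h
    · intro h
      exact tendsto_imp_ECWT hpos h
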